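/- Let K_n be the complete graph on n ≥ 3 vertices and let a ≠ b be two vertices. The graph K_n - {a,b} obtained by deleting the edge ab has Laplacian perfect pair state transfer from e_a - e_q to e_b - e_q at time τ = π/2 for every vertex q ∉ {a,b}: explicitly, exp(-i(π/2)(L - M))(e_b - e_q) = γ(e_a - e_q) for some complex γ with |γ| = 1, where L is the Laplacian of K_n and M = (e_a - e_b)(e_a - e_b)^T. -/

import Mathlib

open Matrix Complex

lemma exp_mulVec_eigen {m : Type*} [Fintype m] [DecidableEq m]
    (A : Matrix m m ℂ) (v : m → ℂ) (μ : ℂ) (h : A.mulVec v = μ • v) :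
    (NormedSpace.exp A).mulVec v = Complex.exp μ • v := by
  letI : SeminormedRing (Matrix m m ℂ) := Matrix.linftyOpSemiNormedRing
  letI : NormedRing (Matrix m m ℂ) := Matrix.linftyOpNormedRing
  letI : NormedAlgebra ℂ (Matrix m m ℂ) := Matrix.linftyOpNormedAlgebra
  have hpow : ∀ k : ℕ, (A ^ k).mulVec v = μ ^ k • v := by
    intro k
    induction k with
    | zero => simp
    | succ k ih =>
      rw [pow_succ, ← Matrix.mulVec_mulVec, h, Matrix.mulVec_smul, ih, smul_smul, pow_succ]
      ring_nf
  let f : Matrix m m ℂ →ₗ[ℂ] (m → ℂ) :=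
    { toFun := fun B => B.mulVec v
      map_add' := fun B C => Matrix.add_mulVec B C v
      map_smul' := fun c B => Matrix.smul_mulVec c B v }
  have hf : Continuous f := LinearMap.continuous_of_finiteDimensional f
  have hsum := (NormedSpace.expSeries_summable' (𝕂 := ℂ) A).hasSum
  have h1 : HasSum (fun k : ℕ => (((k.factorial : ℂ))⁻¹ • A ^ k).mulVec v)
      ((NormedSpace.exp A).mulVec v) := by
    rw [NormedSpace.exp_eq_tsum (𝕂 := ℂ)]
    exact hsum.map f.toAddMonoidHom hf
  have h2 : HasSum (fun k : ℕ => (((k.factorial : ℂ))⁻¹ * μ ^ k) • v)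
      ((NormedSpace.exp A).mulVec v) := by
    refine h1.congr_fun fun k => ?_
    rw [Matrix.smul_mulVec, hpow k, smul_smul]
  have h3 : HasSum (fun k : ℕ => (((k.factorial : ℂ))⁻¹ * μ ^ k) • v)
      (Complex.exp μ • v) := by
    have h4 := (NormedSpace.expSeries_summable' (𝕂 := ℂ) μ).hasSum.smul_const v
    simp only [smul_eq_mul] at h4
    rw [Complex.exp_eq_exp_ℂ, NormedSpace.exp_eq_tsum (𝕂 := ℂ)]
    exact h4
  exact h2.unique h3


lemma vecMulVec_mulVec_eq {m : Type*} [Fintype m] (w v x : m → ℂ) :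
    (vecMulVec w v).mulVec x = (v ⬝ᵥ x) • w := by
  funext i
  simp only [Matrix.mulVec, Matrix.vecMulVec_apply, dotProduct, Pi.smul_apply, smul_eq_mul,
    Finset.sum_mul]
  exact Finset.sum_congr rfl fun j _ => by ring

lemma top_lap_mulVec {n : ℕ} (vec : Fin n → ℂ) (hsum : ∑ i, vec i = 0) :
    ((⊤ : SimpleGraph (Fin n)).lapMatrix ℂ).mulVec vec = (n : ℂ) • vec := by
  funext v
  rw [show ((⊤ : SimpleGraph (Fin n)).lapMatrix ℂ).mulVec vec v
      = ((⊤ : SimpleGraph (Fin n)).lapMatrix ℂ *ᵥ vec) v from rfl,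
    SimpleGraph.lapMatrix_mulVec_apply]
  have h1 : ((⊤ : SimpleGraph (Fin n)).neighborFinset v) = Finset.univ.erase v := by
    ext u
    simp [SimpleGraph.mem_neighborFinset, Finset.mem_erase, eq_comm, ne_comm]
  rw [h1, Finset.sum_erase_eq_sub (Finset.mem_univ v), hsum,
    SimpleGraph.complete_graph_degree, Fintype.card_fin, Nat.cast_sub v.pos]
  simp only [Pi.smul_apply, smul_eq_mul, Nat.cast_one]
  ring

theorem complete_graph_minus_edge_pair_lpst
    {n : ℕ} (hn : 3 ≤ n) (a b : Fin n) (hab : a ≠ b) :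
    ∀ q : Fin n, q ≠ a → q ≠ b →
      ∃ γ : ℂ, ‖γ‖ = 1 ∧
        (NormedSpace.exp ((-(Complex.I * ((Real.pi / 2 : ℝ) : ℂ))) •
            ((⊤ : SimpleGraph (Fin n)).lapMatrix ℂ -
              vecMulVec ((Pi.single a 1 : Fin n → ℂ) - Pi.single b 1)
                ((Pi.single a 1 : Fin n → ℂ) - Pi.single b 1)))).mulVec
            ((Pi.single b 1 : Fin n → ℂ) - Pi.single q 1)
          = γ • ((Pi.single a 1 : Fin n → ℂ) - Pi.single q 1) := by
  intro q hqa hqb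
  set c : ℂ := -(Complex.I * ((Real.pi / 2 : ℝ) : ℂ)) with hc
  set u : Fin n → ℂ := Pi.single a 1 - Pi.single b 1 with hu
  set w : Fin n → ℂ := Pi.single a 1 + Pi.single b 1 - Pi.single q (2:ℂ) with hw
  set A : Matrix (Fin n) (Fin n) ℂ :=
    (⊤ : SimpleGraph (Fin n)).lapMatrix ℂ - vecMulVec u u with hA
  have hsum_u : ∑ i, u i = 0 := by
    simp [hu, Finset.sum_sub_distrib]
  have hsum_w : ∑ i, w i = 0 := by
    simp [hw, Finset.sum_sub_distrib, Finset.sum_add_distrib]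
    ring
  have huu : u ⬝ᵥ u = 2 := by
    simp [hu, sub_dotProduct, dotProduct_sub, single_dotProduct,
      Pi.single_apply, hab, hab.symm]
    ring
  have huw : u ⬝ᵥ w = 0 := by
    simp [hu, hw, sub_dotProduct, dotProduct_sub, dotProduct_add,
      single_dotProduct, Pi.single_apply, hab, hab.symm, hqa, hqb, hqa.symm, hqb.symm]
  have hAu : A.mulVec u = ((n:ℂ) - 2) • u := by
    rw [hA, Matrix.sub_mulVec, top_lap_mulVec u hsum_u, vecMulVec_mulVec_eq, huu, sub_smul]
  have hAw : A.mulVec w = (n:ℂ) • w := by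
    rw [hA, Matrix.sub_mulVec, top_lap_mulVec w hsum_w, vecMulVec_mulVec_eq, huw]
    simp
  have hEu : (c • A).mulVec u = (c * ((n:ℂ) - 2)) • u := by
    rw [Matrix.smul_mulVec, hAu, smul_smul]
  have hEw : (c • A).mulVec w = (c * (n:ℂ)) • w := by
    rw [Matrix.smul_mulVec, hAw, smul_smul]
  have expu := exp_mulVec_eigen (c • A) u _ hEu
  have expw := exp_mulVec_eigen (c • A) w _ hEw
  refine ⟨Complex.exp (c * (n:ℂ)), ?_, ?_⟩
  · rw [Complex.norm_exp]
    have : (c * (n:ℂ)).re = 0 := by simp [hc]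
    rw [this, Real.exp_zero]
  · have hbq : (Pi.single b 1 : Fin n → ℂ) - Pi.single q 1 = (1/2 : ℂ) • w - (1/2 : ℂ) • u := by
      rw [hu, hw]
      funext i
      simp only [Pi.sub_apply, Pi.add_apply, Pi.smul_apply, smul_eq_mul, Pi.single_apply]
      split_ifs <;> ring
    have haq : (Pi.single a 1 : Fin n → ℂ) - Pi.single q 1 = (1/2 : ℂ) • w + (1/2 : ℂ) • u := by
      rw [hu, hw]
      funext i
      simp only [Pi.sub_apply, Pi.add_apply, Pi.smul_apply, smul_eq_mul, Pi.single_apply]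
      split_ifs <;> ring
    rw [hbq, haq, Matrix.mulVec_sub, Matrix.mulVec_smul, Matrix.mulVec_smul, expu, expw]
    have hexp : Complex.exp (c * ((n:ℂ) - 2)) = -Complex.exp (c * (n:ℂ)) := by
      have h2c : c * ((n:ℂ) - 2) = c * (n:ℂ) + Real.pi * Complex.I := by
        rw [hc]; push_cast; ring
      rw [h2c, Complex.exp_add, Complex.exp_pi_mul_I]
      ring
    rw [hexp]
    match_scalars <;> ring
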